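/- Let (W_i)_{i∈ℤ} be a stationary ergodic sequence of integrable real random variables with mean μ. Fix κ > 0 and let R = {(τ_1,τ_2) ∈ [0,1]²: τ_1 < τ_2, τ_2 − τ_1 ≥ κ}. Then sup_{(τ_1,τ_2)∈R} | (1/(n(τ_2−τ_1))) ∑_{i=⌊nτ_1⌋+1}^{⌊nτ_2⌋} W_i − μ | → 0 almost surely. -/

import Mathlib

open MeasureTheory Filter Finset Topology

section Birkhoff

variable {Ω : Type*} [MeasurableSpace Ω] {μ : Measure Ω} {T : Ω → Ω} {g : Ω → ℝ}

private lemma integral_comp_mp (hT : MeasurePreserving T μ μ) {h : Ω → ℝ}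
    (hh : AEStronglyMeasurable h μ) : ∫ x, h (T x) ∂μ = ∫ x, h x ∂μ := by
  conv_rhs => rw [← hT.map_eq]
  exact (integral_map hT.measurable.aemeasurable (by rwa [hT.map_eq])).symm

private lemma integrable_comp_mp (hT : MeasurePreserving T μ μ) {h : Ω → ℝ}
    (hh : Integrable h μ) : Integrable (fun x => h (T x)) μ := by
  rw [← memLp_one_iff_integrable] at hh ⊢
  exact hh.comp_measurePreserving hT

/-- Garsia's maximal function. -/
noncomputable def maxQ (T : Ω → Ω) (g : Ω → ℝ) : ℕ → Ω → ℝ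
  | 0 => fun _ => 0
  | n+1 => fun x => max 0 (g x + maxQ T g n (T x))

lemma maxQ_nonneg (n : ℕ) (x : Ω) : 0 ≤ maxQ T g n x := by
  cases n with
  | zero => simp [maxQ]
  | succ n => exact le_max_left _ _

lemma maxQ_mono (n : ℕ) : ∀ x : Ω, maxQ T g n x ≤ maxQ T g (n+1) x := by
  induction n with
  | zero => intro x; exact maxQ_nonneg 1 x
  | succ n ih =>
    intro x
    exact max_le_max le_rfl (add_le_add le_rfl (ih (T x)))

lemma birkhoffSum_le_maxQ (n : ℕ) : ∀ x : Ω, ∀ k ≤ n, birkhoffSum T g k x ≤ maxQ T g n x := by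
  induction n with
  | zero =>
    intro x k hk
    simp_all [birkhoffSum_zero, maxQ]
  | succ n ih =>
    intro x k hk
    cases k with
    | zero => simpa [birkhoffSum_zero] using maxQ_nonneg (n+1) x
    | succ k =>
      rw [birkhoffSum_succ']
      calc g x + birkhoffSum T g k (T x) ≤ g x + maxQ T g n (T x) :=
            add_le_add le_rfl (ih (T x) k (Nat.succ_le_succ_iff.mp hk))
        _ ≤ maxQ T g (n+1) x := le_max_right _ _

lemma stronglyMeasurable_maxQ (hTm : Measurable T) (hgm : StronglyMeasurable g) (n : ℕ) :
    StronglyMeasurable (maxQ T g n) := by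
  induction n with
  | zero => exact stronglyMeasurable_const
  | succ n ih =>
    exact (measurable_const.max (hgm.measurable.add
      (ih.measurable.comp hTm))).stronglyMeasurable

lemma integrable_maxQ (hT : MeasurePreserving T μ μ) (hg : Integrable g μ) (n : ℕ) :
    Integrable (maxQ T g n) μ := by
  induction n with
  | zero => simpa [maxQ] using integrable_zero Ω ℝ μ
  | succ n ih =>
    have h1 : Integrable (fun x => g x + maxQ T g n (T x)) μ :=
      hg.add (integrable_comp_mp hT ih)
    have h2 : Integrable ((fun _ => (0:ℝ)) ⊔ fun x => g x + maxQ T g n (T x)) μ :=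
      (integrable_zero Ω ℝ μ).sup h1
    exact h2

/-- Maximal ergodic theorem (Garsia's proof). -/
lemma maximal_ergodic [IsFiniteMeasure μ] (hT : MeasurePreserving T μ μ)
    (hgm : StronglyMeasurable g) (hg : Integrable g μ) :
    0 ≤ ∫ x in {x | ∃ n, 0 < maxQ T g n x}, g x ∂μ := by
  set Φ : ℕ → Set Ω := fun n => {x | 0 < maxQ T g n x} with hΦ
  have hΦm : ∀ n, MeasurableSet (Φ n) := fun n =>
    measurableSet_lt measurable_const (stronglyMeasurable_maxQ hT.measurable hgm n).measurable
  have hΦmono : Monotone Φ := by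
    apply monotone_nat_of_le_succ
    intro n x hx
    exact lt_of_lt_of_le hx (maxQ_mono n x)
  have hE : {x | ∃ n, 0 < maxQ T g n x} = ⋃ n, Φ n := by
    ext x; simp [hΦ, Set.mem_iUnion]
  rw [hE]
  have hper : ∀ n, 0 ≤ ∫ x in Φ n, g x ∂μ := by
    intro n
    have hQint : Integrable (maxQ T g n) μ := integrable_maxQ hT hg n
    have hQTint : Integrable (fun x => maxQ T g n (T x)) μ := integrable_comp_mp hT hQint
    have key : ∀ x ∈ Φ n, maxQ T g n x - maxQ T g n (T x) ≤ g x := by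
      intro x hx
      cases n with
      | zero => simp [hΦ, maxQ] at hx
      | succ n =>
        have hpos : 0 < g x + maxQ T g n (T x) := by
          by_contra h
          push_neg at h
          have : maxQ T g (n+1) x = 0 := max_eq_left h
          simp [hΦ, this] at hx
        have heq : maxQ T g (n+1) x = g x + maxQ T g n (T x) := max_eq_right hpos.le
        have hm := maxQ_mono (T := T) (g := g) n (T x)
        linarith [heq]
    have step1 : ∫ x in Φ n, (maxQ T g n x - maxQ T g n (T x)) ∂μ ≤ ∫ x in Φ n, g x ∂μ :=
      setIntegral_mono_on ((hQint.sub hQTint).integrableOn) (hg.integrableOn) (hΦm n) key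
    have step2 : ∫ x in Φ n, (maxQ T g n x - maxQ T g n (T x)) ∂μ
        = ∫ x in Φ n, maxQ T g n x ∂μ - ∫ x in Φ n, maxQ T g n (T x) ∂μ :=
      integral_sub hQint.integrableOn hQTint.integrableOn
    have step3 : ∫ x in Φ n, maxQ T g n x ∂μ = ∫ x, maxQ T g n x ∂μ :=
      setIntegral_eq_integral_of_forall_compl_eq_zero (fun x hx =>
        le_antisymm (not_lt.1 hx) (maxQ_nonneg (T := T) (g := g) n x))
    have step4 : ∫ x in Φ n, maxQ T g n (T x) ∂μ ≤ ∫ x, maxQ T g n (T x) ∂μ :=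
      setIntegral_le_integral hQTint (Eventually.of_forall fun x => maxQ_nonneg n (T x))
    have step5 : ∫ x, maxQ T g n (T x) ∂μ = ∫ x, maxQ T g n x ∂μ :=
      integral_comp_mp hT hQint.aestronglyMeasurable
    linarith
  have hlim := tendsto_setIntegral_of_monotone hΦm hΦmono (hg.integrableOn (s := ⋃ n, Φ n))
  exact ge_of_tendsto' hlim hper

lemma birkhoffSum_sub_const (T : Ω → Ω) (f : Ω → ℝ) (c : ℝ) (n : ℕ) (x : Ω) :
    birkhoffSum T (fun y => f y - c) n x = birkhoffSum T f n x - n * c := by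
  simp [birkhoffSum, Finset.sum_sub_distrib, Finset.card_range, mul_comm]

/-- If the space average of `g` is negative, then a.e. the partial sums of `g` are
bounded above. -/
lemma ae_bddAbove_birkhoffSum [IsProbabilityMeasure μ] (hT : Ergodic T μ)
    (hgm : StronglyMeasurable g) (hg : Integrable g μ) (hneg : ∫ x, g x ∂μ < 0) :
    ∀ᵐ x ∂μ, ∃ M : ℕ, ∀ n, birkhoffSum T g n x ≤ M := by
  set A : Set Ω := ⋂ M : ℕ, ⋃ n : ℕ, {x | (M : ℝ) < birkhoffSum T g n x} with hA
  have hSm : ∀ n, StronglyMeasurable (birkhoffSum T g n) := by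
    intro n
    apply Finset.stronglyMeasurable_fun_sum
    intro i _
    exact hgm.comp_measurable (hT.measurable.iterate i)
  have hAm : MeasurableSet A :=
    MeasurableSet.iInter fun M => MeasurableSet.iUnion fun n =>
      measurableSet_lt measurable_const (hSm n).measurable
  have hmemA : ∀ x, x ∈ A ↔ ∀ M : ℝ, ∃ n, M < birkhoffSum T g n x := by
    intro x
    simp only [hA, Set.mem_iInter, Set.mem_iUnion, Set.mem_setOf_eq]
    constructor
    · intro h M
      obtain ⟨K, hK⟩ := exists_nat_gt M
      obtain ⟨n, hn⟩ := h K
      exact ⟨n, hK.trans hn⟩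
    · intro h M; exact h M
  have hinv : T ⁻¹' A = A := by
    ext x
    rw [Set.mem_preimage, hmemA, hmemA]
    constructor
    · intro h M
      obtain ⟨n, hn⟩ := h (M - g x)
      refine ⟨n + 1, ?_⟩
      rw [birkhoffSum_succ']
      linarith
    · intro h M
      obtain ⟨n, hn⟩ := h (max (M + g x) 0)
      have hn0 : n ≠ 0 := by
        rintro rfl
        rw [birkhoffSum_zero] at hn
        exact absurd hn (not_lt.2 (le_max_right _ _))
      obtain ⟨m, rfl⟩ := Nat.exists_eq_succ_of_ne_zero hn0
      refine ⟨m, ?_⟩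
      rw [birkhoffSum_succ'] at hn
      have := le_max_left (M + g x) 0
      linarith
  rcases hT.toPreErgodic.prob_eq_zero_or_one hAm hinv with h0 | h1
  · have : ∀ᵐ x ∂μ, x ∉ A := by
      rw [ae_iff]; simpa using h0
    filter_upwards [this] with x hx
    rw [hmemA] at hx
    push_neg at hx
    obtain ⟨M, hM⟩ := hx
    obtain ⟨K, hK⟩ := exists_nat_gt M
    exact ⟨K, fun n => (hM n).trans hK.le⟩
  · exfalso
    -- A ⊆ E, so μ E = 1 and the maximal ergodic theorem gives 0 ≤ ∫ g < 0.
    set E : Set Ω := {x | ∃ n, 0 < maxQ T g n x} with hE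
    have hEm : MeasurableSet E := by
      have : E = ⋃ n : ℕ, {x | 0 < maxQ T g n x} := by
        ext x; simp [hE, Set.mem_iUnion]
      rw [this]
      exact MeasurableSet.iUnion fun n => measurableSet_lt measurable_const
        (stronglyMeasurable_maxQ hT.measurable hgm n).measurable
    have hAE : A ⊆ E := by
      intro x hx
      obtain ⟨n, hn⟩ := (hmemA x).1 hx 0
      exact ⟨n, lt_of_lt_of_le hn (birkhoffSum_le_maxQ (T := T) (g := g) n x n le_rfl)⟩
    have hE1 : μ E = 1 := le_antisymm prob_le_one (h1 ▸ measure_mono hAE)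
    have hEuniv : E =ᵐ[μ] (Set.univ : Set Ω) := by
      rw [Filter.eventuallyEq_set]
      have : μ Eᶜ = 0 := by
        rw [measure_compl hEm (measure_ne_top μ E), hE1]; simp
      filter_upwards [measure_eq_zero_iff_ae_notMem.mp this] with x hx
      simp only [Set.mem_compl_iff] at hx
      simp [not_not.mp hx]
    have hmax := maximal_ergodic hT.toMeasurePreserving hgm hg
    rw [← hE, setIntegral_congr_set hEuniv, setIntegral_univ] at hmax
    linarith

/-- Birkhoff's pointwise ergodic theorem (ergodic case, measurable version). -/
lemma birkhoff_ergodic_sm [IsProbabilityMeasure μ] (hT : Ergodic T μ) {f : Ω → ℝ}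
    (hfm : StronglyMeasurable f) (hf : Integrable f μ) :
    ∀ᵐ x ∂μ, Tendsto (fun n => birkhoffSum T f n x / n) atTop (𝓝 (∫ x, f x ∂μ)) := by
  set I := ∫ x, f x ∂μ with hI
  have hup : ∀ j : ℕ, ∀ᵐ x ∂μ, ∃ M : ℕ, ∀ n : ℕ,
      birkhoffSum T f n x ≤ n * (I + 1/(j+1)) + M := by
    intro j
    set c : ℝ := I + 1/(j+1) with hc
    have h1 : ∀ᵐ x ∂μ, ∃ M : ℕ, ∀ n, birkhoffSum T (fun y => f y - c) n x ≤ M := by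
      apply ae_bddAbove_birkhoffSum hT (hfm.sub stronglyMeasurable_const)
        (hf.sub (integrable_const c))
      simp only [Pi.sub_apply]
      rw [integral_sub hf (integrable_const c), integral_const]
      simp only [measure_univ, probReal_univ, one_smul, hc, ← hI]
      have : 0 < 1/((j:ℝ)+1) := by positivity
      linarith
    filter_upwards [h1] with x hx
    obtain ⟨M, hM⟩ := hx
    refine ⟨M, fun n => ?_⟩
    have := hM n
    rw [birkhoffSum_sub_const] at this
    linarith
  have hdown : ∀ j : ℕ, ∀ᵐ x ∂μ, ∃ M : ℕ, ∀ n : ℕ,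
      -(birkhoffSum T f n x) ≤ n * (-I + 1/(j+1)) + M := by
    intro j
    set c : ℝ := -I + 1/(j+1) with hc
    have h1 : ∀ᵐ x ∂μ, ∃ M : ℕ, ∀ n, birkhoffSum T (fun y => -f y - c) n x ≤ M := by
      apply ae_bddAbove_birkhoffSum hT (hfm.neg.sub stronglyMeasurable_const)
        (hf.neg.sub (integrable_const c))
      simp only [Pi.sub_apply, Pi.neg_apply]
      rw [integral_sub (show Integrable (fun x => -(f x)) μ from hf.neg) (integrable_const c),
        integral_const, integral_neg]
      simp only [measure_univ, probReal_univ, one_smul, hc, ← hI]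
      have : 0 < 1/((j:ℝ)+1) := by positivity
      linarith
    filter_upwards [h1] with x hx
    obtain ⟨M, hM⟩ := hx
    refine ⟨M, fun n => ?_⟩
    have h2 := hM n
    rw [birkhoffSum_sub_const] at h2
    have h3 : birkhoffSum T (fun y => -f y) n x = -(birkhoffSum T f n x) := by
      simp [birkhoffSum]
    rw [h3] at h2
    linarith
  rw [← ae_all_iff] at hup hdown
  filter_upwards [hup, hdown] with x hxu hxd
  rw [Metric.tendsto_atTop]
  intro ε hε
  obtain ⟨j, hj⟩ := exists_nat_one_div_lt (half_pos hε)
  obtain ⟨M₁, hM₁⟩ := hxu j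
  obtain ⟨M₂, hM₂⟩ := hxd j
  have hlim : Tendsto (fun n : ℕ => (max (M₁ : ℝ) M₂ + 1) / n) atTop (𝓝 0) :=
    tendsto_const_div_atTop_nhds_zero_nat _
  have hev : ∀ᶠ n : ℕ in atTop, (max (M₁ : ℝ) M₂ + 1) / n < ε/2 - 1/(j+1) :=
    hlim.eventually (eventually_lt_nhds (by linarith))
  obtain ⟨N, hN⟩ := (hev.and (eventually_ge_atTop 1)).exists_forall_of_atTop
  refine ⟨N, fun n hn => ?_⟩
  obtain ⟨h2, h3⟩ := hN n hn
  have hn0 : (0:ℝ) < n := by exact_mod_cast h3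
  rw [Real.dist_eq, abs_sub_lt_iff]
  have hnne : (n:ℝ) ≠ 0 := ne_of_gt hn0
  have hd1 : (n*(I + 1/((j:ℝ)+1)) + M₁)/n = I + 1/((j:ℝ)+1) + M₁/n := by
    field_simp
  have hd2 : (n*(-I + 1/((j:ℝ)+1)) + M₂)/n = -I + 1/((j:ℝ)+1) + M₂/n := by
    field_simp
  have e1 : birkhoffSum T f n x / n ≤ I + 1/((j:ℝ)+1) + M₁/n := by
    rw [← hd1]
    exact (div_le_div_iff_of_pos_right hn0).mpr (hM₁ n)
  have e2 : -(birkhoffSum T f n x) / n ≤ -I + 1/((j:ℝ)+1) + M₂/n := by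
    rw [← hd2]
    exact (div_le_div_iff_of_pos_right hn0).mpr (hM₂ n)
  have e2' : -(birkhoffSum T f n x / n) ≤ -I + 1/((j:ℝ)+1) + M₂/n := by
    rwa [neg_div] at e2
  have e3 : (M₁:ℝ)/n < ε/2 - 1/((j:ℝ)+1) := lt_of_le_of_lt
    ((div_le_div_iff_of_pos_right hn0).mpr (by
      have : (M₁:ℝ) ≤ max (M₁:ℝ) M₂ := le_max_left _ _
      linarith)) h2
  have e4 : (M₂:ℝ)/n < ε/2 - 1/((j:ℝ)+1) := lt_of_le_of_lt
    ((div_le_div_iff_of_pos_right hn0).mpr (by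
      have : (M₂:ℝ) ≤ max (M₁:ℝ) M₂ := le_max_right _ _
      linarith)) h2
  constructor
  · linarith
  · linarith

/-- Birkhoff's pointwise ergodic theorem (ergodic case). -/
lemma birkhoff_ergodic_ae [IsProbabilityMeasure μ] (hT : Ergodic T μ) {f : Ω → ℝ}
    (hf : Integrable f μ) :
    ∀ᵐ x ∂μ, Tendsto (fun n => birkhoffSum T f n x / n) atTop (𝓝 (∫ x, f x ∂μ)) := by
  set g := hf.1.mk f with hg
  have hgm : StronglyMeasurable g := hf.1.stronglyMeasurable_mk
  have hgi : Integrable g μ := hf.congr hf.1.ae_eq_mk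
  have h1 := birkhoff_ergodic_sm hT hgm hgi
  have hint : ∫ x, g x ∂μ = ∫ x, f x ∂μ := integral_congr_ae hf.1.ae_eq_mk.symm
  have heq : ∀ᵐ x ∂μ, ∀ k : ℕ, f (T^[k] x) = g (T^[k] x) := by
    rw [ae_all_iff]
    intro k
    have hmp : MeasurePreserving (T^[k]) μ μ := hT.toMeasurePreserving.iterate k
    have := ae_eq_comp (f := T^[k]) hmp.measurable.aemeasurable
      (g := f) (g' := g) (by rw [hmp.map_eq]; exact hf.1.ae_eq_mk)
    exact this
  filter_upwards [h1, heq] with x hx hfg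
  rw [← hint]
  have : ∀ n : ℕ, birkhoffSum T f n x = birkhoffSum T g n x := by
    intro n
    exact Finset.sum_congr rfl fun k _ => hfg k
  simpa only [this] using hx

end Birkhoff

set_option maxHeartbeats 1000000 in
/-- Uniform ergodic theorem over sub-windows of relative length at least κ:
the windowed averages converge to the mean uniformly over all such windows, a.s. -/
theorem stmt13 {Ω : Type*} [MeasurableSpace Ω] (μ : Measure Ω) [IsProbabilityMeasure μ]
    (T : Ω → Ω) (hT : Ergodic T μ) (f : Ω → ℝ) (hf : Integrable f μ)
    (κ : ℝ) (hκ : 0 < κ) :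
    ∀ᵐ ω ∂μ, ∀ ε : ℝ, 0 < ε →
      ∀ᶠ n : ℕ in atTop, ∀ τ1 τ2 : ℝ, 0 ≤ τ1 → τ2 ≤ 1 → κ ≤ τ2 - τ1 →
        |(1 / ((n : ℝ) * (τ2 - τ1))) *
            (∑ i ∈ Finset.Ioc ⌊(n : ℝ) * τ1⌋₊ ⌊(n : ℝ) * τ2⌋₊, f (T^[i] ω)) -
          ∫ x, f x ∂μ| ≤ ε := by
  filter_upwards [birkhoff_ergodic_ae hT hf] with ω hω
  intro ε hε
  set I : ℝ := ∫ x, f x ∂μ with hI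
  set L : ℕ → ℝ := fun m => birkhoffSum T f m ω with hL
  set δ : ℝ := ε * κ / 8 with hδ
  have hδ0 : 0 < δ := by positivity
  -- get N from the pointwise convergence
  obtain ⟨N, hN⟩ := Metric.tendsto_atTop.mp hω δ hδ0
  set C : ℝ := ∑ m ∈ Finset.range N, |L m - m * I| with hC
  have hC0 : 0 ≤ C := Finset.sum_nonneg fun _ _ => abs_nonneg _
  have hkey : ∀ m : ℕ, |L m - m * I| ≤ δ * m + C := by
    intro m
    rcases lt_or_ge m N with h | h
    · have h1 : |L m - m * I| ≤ C :=
        Finset.single_le_sum (f := fun k => |L k - k * I|)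
          (fun _ _ => abs_nonneg _) (Finset.mem_range.2 h)
      have h2 : (0:ℝ) ≤ δ * m := by positivity
      linarith
    · rcases Nat.eq_zero_or_pos m with rfl | hm
      · simp only [hL, birkhoffSum_zero, Nat.cast_zero, zero_mul, sub_zero, abs_zero]
        positivity
      · have hd := hN m h
        rw [Real.dist_eq] at hd
        have hm' : (0:ℝ) < m := by exact_mod_cast hm
        have habs : |L m - m * I| = m * |L m / m - I| := by
          rw [← abs_of_pos hm', ← abs_mul]
          congr 1
          field_simp
          rw [abs_of_pos hm']; ring
        rw [habs]
        have : (m:ℝ) * |L m / m - I| ≤ m * δ := by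
          apply mul_le_mul_of_nonneg_left hd.le hm'.le
        nlinarith
  -- eventual smallness of the constant term
  have hfrac : Tendsto (fun n : ℕ => ((2*C + 2*|I|)/κ) / n) atTop (𝓝 0) :=
    tendsto_const_div_atTop_nhds_zero_nat _
  have hev2 : ∀ᶠ n : ℕ in atTop, ((2*C + 2*|I|)/κ) / n ≤ ε/2 :=
    hfrac.eventually (eventually_le_nhds (by positivity))
  filter_upwards [eventually_ge_atTop 1, hev2] with n hn1 hn2
  intro τ1 τ2 hτ1 hτ2 hκD
  have hnR : (1:ℝ) ≤ n := by exact_mod_cast hn1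
  have hn0 : (0:ℝ) < n := by linarith
  set D : ℝ := τ2 - τ1 with hD
  have hD0 : 0 < D := lt_of_lt_of_le hκ hκD
  have hτ12 : τ1 ≤ τ2 := by linarith [hD0]
  have hτ20 : 0 ≤ τ2 := by linarith
  set a : ℕ := ⌊(n:ℝ) * τ1⌋₊ with ha
  set b : ℕ := ⌊(n:ℝ) * τ2⌋₊ with hb
  have ha1 : (a:ℝ) ≤ n * τ1 := Nat.floor_le (by positivity)
  have ha2 : (n:ℝ) * τ1 < a + 1 := Nat.lt_floor_add_one _
  have hb1 : (b:ℝ) ≤ n * τ2 := Nat.floor_le (by positivity)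
  have hb2 : (n:ℝ) * τ2 < b + 1 := Nat.lt_floor_add_one _
  have hab : a ≤ b := Nat.floor_le_floor (by
    apply mul_le_mul_of_nonneg_left hτ12 hn0.le)
  -- the sum over the window
  have hsum : ∑ i ∈ Finset.Ioc a b, f (T^[i] ω) = L (b+1) - L (a+1) := by
    have hsplit : ∑ i ∈ Finset.range (a+1), f (T^[i] ω)
        + ∑ i ∈ Finset.Ioc a b, f (T^[i] ω)
        = ∑ i ∈ Finset.range (b+1), f (T^[i] ω) := by
      rw [Finset.range_eq_Ico, Finset.range_eq_Ico, ← Finset.Ico_add_one_add_one_eq_Ioc]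
      exact Finset.sum_Ico_consecutive (fun i => f (T^[i] ω)) (Nat.zero_le _) (Nat.succ_le_succ hab)
    have hLb : L (b+1) = ∑ i ∈ Finset.range (b+1), f (T^[i] ω) := rfl
    have hLa : L (a+1) = ∑ i ∈ Finset.range (a+1), f (T^[i] ω) := rfl
    rw [hLb, hLa]
    linarith
  -- size bounds
  have hτ1le : (n:ℝ) * τ1 ≤ n := by nlinarith
  have hτ2le : (n:ℝ) * τ2 ≤ n := by nlinarith
  have hb3 : (b:ℝ) + 1 ≤ 2 * n := by linarith
  have ha3 : (a:ℝ) + 1 ≤ 2 * n := by linarith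
  have hnD : (n:ℝ) * D = n * τ2 - n * τ1 := by rw [hD]; ring
  -- floor error
  have e3 : |((b:ℝ) + 1) - ((a:ℝ) + 1) - n * D| ≤ 2 := by
    rw [hnD, abs_le]
    constructor <;> linarith
  -- key estimates from Birkhoff
  have e1 : |L (b+1) - ((b:ℝ)+1) * I| ≤ δ * ((b:ℝ)+1) + C := by
    have := hkey (b+1)
    push_cast at this
    convert this using 3 <;> push_cast <;> ring
  have e2 : |L (a+1) - ((a:ℝ)+1) * I| ≤ δ * ((a:ℝ)+1) + C := by
    have := hkey (a+1)
    push_cast at this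
    convert this using 3 <;> push_cast <;> ring
  set X : ℝ := L (b+1) - L (a+1) with hX
  have hXsplit : X - (n * D) * I
      = (L (b+1) - ((b:ℝ)+1) * I) - (L (a+1) - ((a:ℝ)+1) * I)
        + ((((b:ℝ)+1) - ((a:ℝ)+1)) - n * D) * I := by
    rw [hX]; ring
  have hnum : |X - (n * D) * I| ≤ 4 * δ * n + 2 * C + 2 * |I| := by
    have t1 : |X - (n * D) * I| ≤ |L (b+1) - ((b:ℝ)+1) * I| + |L (a+1) - ((a:ℝ)+1) * I|
        + |(((b:ℝ)+1) - ((a:ℝ)+1)) - n * D| * |I| := by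
      rw [hXsplit]
      calc |_ + _| ≤ |(L (b+1) - ((b:ℝ)+1) * I) - (L (a+1) - ((a:ℝ)+1) * I)|
            + |((((b:ℝ)+1) - ((a:ℝ)+1)) - n * D) * I| := abs_add_le _ _
        _ ≤ _ := by
            rw [abs_mul]
            exact add_le_add_left (abs_sub _ _) _
    have t2 : |(((b:ℝ)+1) - ((a:ℝ)+1)) - n * D| * |I| ≤ 2 * |I| :=
      mul_le_mul_of_nonneg_right e3 (abs_nonneg _)
    have t3 : δ * ((b:ℝ)+1) ≤ δ * (2*n) := mul_le_mul_of_nonneg_left hb3 hδ0.le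
    have t4 : δ * ((a:ℝ)+1) ≤ δ * (2*n) := mul_le_mul_of_nonneg_left ha3 hδ0.le
    nlinarith [abs_nonneg I]
  -- final computation
  have hden : (0:ℝ) < n * D := by positivity
  have hdenκ : (0:ℝ) < n * κ := by positivity
  have hrw : (1 / ((n:ℝ) * D)) * X - I = (X - (n * D) * I) / (n * D) := by
    field_simp
  rw [hsum]
  rw [hrw]
  rw [abs_div, abs_of_pos hden]
  have hstep : |X - (n * D) * I| / (n * D) ≤ (4 * δ * n + 2 * C + 2 * |I|) / (n * κ) := by
    apply div_le_div₀ (by positivity) hnum hdenκ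
    exact mul_le_mul_of_nonneg_left hκD hn0.le
  have hsplit2 : (4 * δ * n + 2 * C + 2 * |I|) / ((n:ℝ) * κ)
      = 4 * δ / κ + ((2*C + 2*|I|)/κ) / n := by
    field_simp
    ring
  have hδκ : 4 * δ / κ = ε / 2 := by
    rw [hδ]
    field_simp
    ring
  rw [hsplit2, hδκ] at hstep
  linarith
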